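/- arXiv:2304.03672 — 3 statements merged into one kernel-verified Lean document; each statement's English description precedes it below -/
import Mathlib

section
/- (Theorem 1 of the paper.) Let d be a square-integrable random vector in ℝⁿ on a probability space (Ω, μ), and let C ⊆ ℝⁿ be a measurable set such that E[d] ∈ C and the diameter of C is at most d_C (i.e., ‖x − y‖ ≤ d_C for all x, y ∈ C). Assume there is a constant α ≥ 0 such that ‖d(ω) − E[d]‖² ≤ α for μ-almost every ω with d(ω) ∉ C. Then the sum of the componentwise descriptor variances is bounded above by Σ_{j=1}^{n} Var(d⁽ʲ⁾) ≤ d_C² + α·(1 − μ({d ∈ C})). In particular, maximizing the probability μ({d ∈ C}) that the descriptor belongs to the cell minimizes this upper bound on the trace of the covariance matrix of d. -/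
open MeasureTheory ProbabilityTheory

/-- Theorem 1 of the paper: if `C` is a measurable cell containing `E[d]` with
diameter at most `dC`, and `‖d − E[d]‖² ≤ α` almost surely outside the event
`{d ∈ C}`, then the sum of the componentwise descriptor variances is bounded by
`dC² + α·(1 − μ({d ∈ C}))`. -/
theorem sum_variance_le_of_prob_in_cell
    {Ω : Type*} [MeasurableSpace Ω] (μ : Measure Ω) [IsProbabilityMeasure μ]
    (n : ℕ) (hn : 0 < n)
    (d : Ω → EuclideanSpace ℝ (Fin n)) (hd : Measurable d)
    (h2 : ∀ j : Fin n, MemLp (fun ω => d ω j) 2 μ)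
    (C : Set (EuclideanSpace ℝ (Fin n))) (hC : MeasurableSet C)
    (dC : ℝ)
    (hmean : (∫ ω, d ω ∂μ) ∈ C)
    (hdiam : ∀ x ∈ C, ∀ y ∈ C, ‖x - y‖ ≤ dC)
    (α : ℝ) (hα : 0 ≤ α)
    (hout : ∀ᵐ ω ∂μ, d ω ∉ C → ‖d ω - ∫ ω', d ω' ∂μ‖ ^ 2 ≤ α) :
    ∑ j : Fin n, variance (fun ω => d ω j) μ
      ≤ dC ^ 2 + α * (1 - (μ (d ⁻¹' C)).toReal) := by
  set m : EuclideanSpace ℝ (Fin n) := ∫ ω, d ω ∂μ with hm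
  have hdC0 : 0 ≤ dC := by
    have := hdiam m hmean m hmean
    simpa using this
  have hnormsq : ∀ x : EuclideanSpace ℝ (Fin n), ‖x‖ ^ 2 = ∑ j, (x j) ^ 2 := by
    intro x
    rw [EuclideanSpace.norm_eq, Real.sq_sqrt (by positivity)]
    simp [Real.norm_eq_abs, sq_abs]
  -- d is integrable
  have hint : Integrable d μ := by
    refine Integrable.mono' (g := fun ω => ∑ j, |d ω j|)
      (integrable_finset_sum _ fun j _ => ((h2 j).integrable one_le_two).abs)
      hd.aestronglyMeasurable ?_
    filter_upwards with ω
    rw [EuclideanSpace.norm_eq]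
    have h1 : ∑ j, ‖d ω j‖ ^ 2 ≤ (∑ j, |d ω j|) ^ 2 := by
      simpa [Real.norm_eq_abs] using
        Finset.sum_sq_le_sq_sum_of_nonneg (f := fun j => |d ω j|)
          (s := Finset.univ) (fun i _ => abs_nonneg _)
    calc Real.sqrt (∑ j, ‖d ω j‖ ^ 2) ≤ Real.sqrt ((∑ j, |d ω j|) ^ 2) :=
          Real.sqrt_le_sqrt h1
      _ = ∑ j, |d ω j| := Real.sqrt_sq (by positivity)
  have hmj : ∀ j, (∫ ω, d ω j ∂μ) = m j := by
    intro j
    exact (EuclideanSpace.proj j (𝕜 := ℝ)).integral_comp_comm hint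
  have hvar : ∀ j, variance (fun ω => d ω j) μ = ∫ ω, (d ω j - m j) ^ 2 ∂μ := by
    intro j
    rw [variance_eq_integral (h2 j).aestronglyMeasurable.aemeasurable]
    simp only [Pi.pow_apply, Pi.sub_apply]
    rw [hmj j]
  have hintsq : ∀ j : Fin n, Integrable (fun ω => (d ω j - m j) ^ 2) μ :=
    fun j => ((h2 j).sub (memLp_const (m j))).integrable_sq
  have hsub : ∀ ω, ‖d ω - m‖ ^ 2 = ∑ j, (d ω j - m j) ^ 2 := by
    intro ω
    rw [hnormsq (d ω - m)]
    rfl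
  have hsum : ∑ j : Fin n, variance (fun ω => d ω j) μ = ∫ ω, ‖d ω - m‖ ^ 2 ∂μ := by
    simp_rw [hvar, hsub]
    rw [integral_finset_sum _ fun j _ => hintsq j]
  have hnormint : Integrable (fun ω => ‖d ω - m‖ ^ 2) μ := by
    have : Integrable (fun ω => ∑ j, (d ω j - m j) ^ 2) μ :=
      integrable_finset_sum _ fun j _ => hintsq j
    exact this.congr (Filter.Eventually.of_forall fun ω => (hsub ω).symm)
  set g : Ω → ℝ := fun ω => Set.indicator (d ⁻¹' C) (fun _ => dC ^ 2) ω
      + Set.indicator (d ⁻¹' C)ᶜ (fun _ => α) ω with hg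
  have hmeasC : MeasurableSet (d ⁻¹' C) := hd hC
  have hgint : Integrable g μ :=
    ((integrable_const (dC ^ 2)).indicator hmeasC).add
      ((integrable_const α).indicator hmeasC.compl)
  have hle : ∀ᵐ ω ∂μ, ‖d ω - m‖ ^ 2 ≤ g ω := by
    filter_upwards [hout] with ω hω
    by_cases h : d ω ∈ C
    · have h1 : ‖d ω - m‖ ≤ dC := hdiam _ h _ hmean
      have h2' : ‖d ω - m‖ ^ 2 ≤ dC ^ 2 := by
        have := pow_le_pow_left₀ (norm_nonneg _) h1 2
        simpa using this
      simp only [hg, Set.indicator_of_mem (show ω ∈ d ⁻¹' C from h),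
        Set.indicator_of_notMem (show ω ∉ (d ⁻¹' C)ᶜ by simpa using h)]
      simpa using h2'
    · have h2' := hω h
      simp only [hg, Set.indicator_of_notMem (show ω ∉ d ⁻¹' C from h),
        Set.indicator_of_mem (show ω ∈ (d ⁻¹' C)ᶜ by simpa using h)]
      simpa using h2'
  have hgval : ∫ ω, g ω ∂μ
      = dC ^ 2 * (μ (d ⁻¹' C)).toReal + α * (μ (d ⁻¹' C)ᶜ).toReal := by
    rw [hg, integral_add ((integrable_const (dC ^ 2)).indicator hmeasC)
      ((integrable_const α).indicator hmeasC.compl),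
      integral_indicator_const _ hmeasC, integral_indicator_const _ hmeasC.compl]
    simp [smul_eq_mul, Measure.real]
    ring
  have hcompl : (μ (d ⁻¹' C)ᶜ).toReal = 1 - (μ (d ⁻¹' C)).toReal := by
    rw [measure_compl hmeasC (measure_ne_top μ _), measure_univ]
    rw [ENNReal.toReal_sub_of_le prob_le_one ENNReal.one_ne_top]
    simp
  have hμle : (μ (d ⁻¹' C)).toReal ≤ 1 := by
    simpa using ENNReal.toReal_mono ENNReal.one_ne_top (prob_le_one (μ := μ) (s := d ⁻¹' C))
  calc ∑ j : Fin n, variance (fun ω => d ω j) μ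
      = ∫ ω, ‖d ω - m‖ ^ 2 ∂μ := hsum
    _ ≤ ∫ ω, g ω ∂μ := integral_mono_ae hnormint hgint hle
    _ = dC ^ 2 * (μ (d ⁻¹' C)).toReal + α * (1 - (μ (d ⁻¹' C)).toReal) := by
        rw [hgval, hcompl]
    _ ≤ dC ^ 2 + α * (1 - (μ (d ⁻¹' C)).toReal) := by
        have : dC ^ 2 * (μ (d ⁻¹' C)).toReal ≤ dC ^ 2 := by
          nlinarith [ENNReal.toReal_nonneg (a := μ (d ⁻¹' C))]
        linarith
end

section
/- (Bounded descriptor space corollary of Theorem 1.) Let d be a square-integrable random vector in ℝⁿ on a probability space (Ω, μ) that almost surely takes values in a bounded set K ⊆ ℝⁿ of diameter at most D, and let C ⊆ ℝⁿ be a measurable set with E[d] ∈ C and with diameter at most d_C. Then ‖d − E[d]‖ ≤ D almost surely (since E[d] lies in the closed convex hull of K, which has the same diameter as K), and consequently Σ_{j=1}^{n} Var(d⁽ʲ⁾) ≤ d_C² + D²·(1 − μ({d ∈ C})). -/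
open MeasureTheory ProbabilityTheory

/-- Bounded descriptor space corollary of Theorem 1: if `d` almost surely takes
values in a set `K` of diameter at most `D`, and `C` is a measurable cell
containing `E[d]` with diameter at most `dC`, then `‖d − E[d]‖ ≤ D` almost
surely, and the sum of componentwise variances is at most
`dC² + D²·(1 − μ({d ∈ C}))`. -/
theorem sum_variance_le_of_bounded_descriptor_space
    {Ω : Type*} [MeasurableSpace Ω] (μ : Measure Ω) [IsProbabilityMeasure μ]
    (n : ℕ) (hn : 0 < n)
    (d : Ω → EuclideanSpace ℝ (Fin n)) (hd : Measurable d)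
    (h2 : ∀ j : Fin n, MemLp (fun ω => d ω j) 2 μ)
    (K : Set (EuclideanSpace ℝ (Fin n))) (D : ℝ)
    (hK : ∀ᵐ ω ∂μ, d ω ∈ K)
    (hKdiam : ∀ x ∈ K, ∀ y ∈ K, ‖x - y‖ ≤ D)
    (C : Set (EuclideanSpace ℝ (Fin n))) (hC : MeasurableSet C)
    (dC : ℝ)
    (hmean : (∫ ω, d ω ∂μ) ∈ C)
    (hdiam : ∀ x ∈ C, ∀ y ∈ C, ‖x - y‖ ≤ dC) :
    (∀ᵐ ω ∂μ, ‖d ω - ∫ ω', d ω' ∂μ‖ ≤ D) ∧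
    ∑ j : Fin n, variance (fun ω => d ω j) μ
      ≤ dC ^ 2 + D ^ 2 * (1 - (μ (d ⁻¹' C)).toReal) := by
  set m : EuclideanSpace ℝ (Fin n) := ∫ ω, d ω ∂μ with hm
  -- integrability of each component
  have hint1 : ∀ j : Fin n, Integrable (fun ω => d ω j) μ := fun j =>
    (h2 j).integrable one_le_two
  -- d is integrable
  have hdec : ∀ ω, d ω = ∑ j : Fin n, (d ω j) • (EuclideanSpace.single j (1:ℝ)) := by
    intro ω
    ext i
    have : (∑ j : Fin n, (d ω j) • (EuclideanSpace.single j (1:ℝ))) i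
        = ∑ j : Fin n, ((d ω j) • (EuclideanSpace.single j (1:ℝ))) i :=
      by rw [WithLp.ofLp_sum]; exact Finset.sum_apply i Finset.univ _
    rw [this]
    simp [EuclideanSpace.single_apply, mul_comm]
  have hinteg : Integrable d μ := by
    have : Integrable (fun ω => ∑ j : Fin n,
        (d ω j) • (EuclideanSpace.single j (1:ℝ))) μ :=
      integrable_finset_sum _ fun j _ => (hint1 j).smul_const _
    exact this.congr (Filter.Eventually.of_forall fun ω => (hdec ω).symm)
  -- the mean lies in all closed balls around points of K
  have hms : m ∈ ⋂ x ∈ K, Metric.closedBall x D := by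
    refine Convex.integral_mem ?_ ?_ ?_ hinteg
    · exact convex_iInter₂ fun x _ => convex_closedBall x D
    · exact isClosed_biInter fun x _ => Metric.isClosed_closedBall
    · filter_upwards [hK] with ω hω
      refine Set.mem_iInter₂.2 fun x hx => ?_
      rw [Metric.mem_closedBall, dist_eq_norm]
      exact hKdiam _ hω x hx
  have part1 : ∀ᵐ ω ∂μ, ‖d ω - m‖ ≤ D := by
    filter_upwards [hK] with ω hω
    have := Set.mem_iInter₂.1 hms (d ω) hω
    rw [Metric.mem_closedBall, dist_eq_norm] at this
    simpa [norm_sub_rev] using this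
  refine ⟨part1, ?_⟩
  -- mean of each component
  have hmj : ∀ j : Fin n, (∫ ω, d ω j ∂μ) = m j := fun j =>
    ((EuclideanSpace.proj j : EuclideanSpace ℝ (Fin n) →L[ℝ] ℝ).integral_comp_comm
      hinteg)
  -- variance as integral
  have hvar : ∀ j : Fin n, variance (fun ω => d ω j) μ
      = ∫ ω, (d ω j - m j) ^ 2 ∂μ := by
    intro j
    rw [variance_eq_integral (h2 j).aemeasurable]
    simp [hmj j]
  -- integrability of squared deviations
  have hsqint : ∀ j : Fin n, Integrable (fun ω => (d ω j - m j) ^ 2) μ := by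
    intro j
    have := ((h2 j).sub (memLp_const (m j))).integrable_sq
    simpa [sub_eq_add_neg] using this
  -- norm squared identity
  have hnsq : ∀ ω, ‖d ω - m‖ ^ 2 = ∑ j : Fin n, (d ω j - m j) ^ 2 := by
    intro ω
    rw [EuclideanSpace.norm_eq]
    rw [Real.sq_sqrt (by positivity)]
    simp [sq_abs]
  have hgint : Integrable (fun ω => ‖d ω - m‖ ^ 2) μ := by
    have : Integrable (fun ω => ∑ j : Fin n, (d ω j - m j) ^ 2) μ :=
      integrable_finset_sum _ fun j _ => hsqint j
    exact this.congr (Filter.Eventually.of_forall fun ω => (hnsq ω).symm)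
  have hsum : ∑ j : Fin n, variance (fun ω => d ω j) μ
      = ∫ ω, ‖d ω - m‖ ^ 2 ∂μ := by
    calc ∑ j : Fin n, variance (fun ω => d ω j) μ
        = ∑ j : Fin n, ∫ ω, (d ω j - m j) ^ 2 ∂μ := by
          exact Finset.sum_congr rfl fun j _ => hvar j
      _ = ∫ ω, ∑ j : Fin n, (d ω j - m j) ^ 2 ∂μ :=
          (integral_finset_sum _ fun j _ => hsqint j).symm
      _ = ∫ ω, ‖d ω - m‖ ^ 2 ∂μ := by
          exact integral_congr_ae (Filter.Eventually.of_forall fun ω => (hnsq ω).symm)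
  set A : Set Ω := d ⁻¹' C with hA
  have hAmeas : MeasurableSet A := hd hC
  have hdC0 : 0 ≤ dC := by
    have := hdiam m hmean m hmean
    simpa using this
  -- bound function
  set h : Ω → ℝ := fun ω =>
    A.indicator (fun _ => dC ^ 2) ω + Aᶜ.indicator (fun _ => D ^ 2) ω with hh
  have hhint : Integrable h μ := by
    exact ((integrable_const (dC ^ 2)).indicator hAmeas).add
      ((integrable_const (D ^ 2)).indicator hAmeas.compl)
  have hbound : ∀ᵐ ω ∂μ, ‖d ω - m‖ ^ 2 ≤ h ω := by
    filter_upwards [part1] with ω hω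
    by_cases hωA : ω ∈ A
    · have h1 : ‖d ω - m‖ ≤ dC := hdiam _ hωA m hmean
      have : ‖d ω - m‖ ^ 2 ≤ dC ^ 2 := by
        exact pow_le_pow_left₀ (norm_nonneg _) h1 2
      simpa [hh, Set.indicator_of_mem hωA, Set.indicator_of_notMem
        (by simpa using hωA : ω ∉ Aᶜ)] using this
    · have : ‖d ω - m‖ ^ 2 ≤ D ^ 2 := pow_le_pow_left₀ (norm_nonneg _) hω 2
      simpa [hh, Set.indicator_of_notMem hωA,
        Set.indicator_of_mem (Set.mem_compl hωA)] using this
  have hintle : ∫ ω, ‖d ω - m‖ ^ 2 ∂μ ≤ ∫ ω, h ω ∂μ :=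
    integral_mono_ae hgint hhint hbound
  have hcompl : (μ Aᶜ).toReal = 1 - (μ A).toReal := by
    rw [prob_compl_eq_one_sub hAmeas]
    rw [ENNReal.toReal_sub_of_le prob_le_one ENNReal.one_ne_top]
    simp
  have hintH : ∫ ω, h ω ∂μ
      = dC ^ 2 * (μ A).toReal + D ^ 2 * (1 - (μ A).toReal) := by
    rw [hh, integral_add ((integrable_const (dC ^ 2)).indicator hAmeas)
      ((integrable_const (D ^ 2)).indicator hAmeas.compl),
      integral_indicator_const _ hAmeas, integral_indicator_const _ hAmeas.compl,
      measureReal_def, measureReal_def, hcompl]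
    simp only [smul_eq_mul]
    ring
  have hle1 : (μ A).toReal ≤ 1 := by
    simpa using ENNReal.toReal_mono ENNReal.one_ne_top (prob_le_one (μ := μ) (s := A))
  calc ∑ j : Fin n, variance (fun ω => d ω j) μ
      = ∫ ω, ‖d ω - m‖ ^ 2 ∂μ := hsum
    _ ≤ ∫ ω, h ω ∂μ := hintle
    _ = dC ^ 2 * (μ A).toReal + D ^ 2 * (1 - (μ A).toReal) := hintH
    _ ≤ dC ^ 2 + D ^ 2 * (1 - (μ A).toReal) := by
        nlinarith [sq_nonneg dC, (μ A).toReal, ENNReal.toReal_nonneg (a := μ A)]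
end

section
/- (Theorem 2, probability bound.) Let f : Ω → ℝ and d : Ω → ℝⁿ be measurable, let C ⊆ ℝⁿ be measurable with centroid c ∈ ℝⁿ, and suppose f_min ≤ f(ω) ≤ f_max holds μ-almost surely, with f_min < f_max. Define õ(ω) = f(ω) if d(ω) ∈ C and õ(ω) = f_min − ‖d(ω) − c‖ otherwise, and assume õ is integrable. Then the probability that the descriptor belongs to the cell satisfies μ({d ∈ C}) ≥ (E[õ] − f_min)/(f_max − f_min). In particular, maximizing the expectation E[õ] maximizes a lower bound on μ({d ∈ C}). -/
open MeasureTheory ProbabilityTheory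

/-- Theorem 2 of the paper (probability bound): if `f_min ≤ f ≤ f_max` almost
surely with `f_min < f_max`, then for the stochastic objective
`õ(ω) = f(ω)` if `d(ω) ∈ C` and `õ(ω) = f_min − ‖d(ω) − c‖` otherwise,
the probability that the descriptor belongs to the cell satisfies
`μ({d ∈ C}) ≥ (E[õ] − f_min)/(f_max − f_min)`. -/
theorem prob_in_cell_ge_of_expectation_objective
    {Ω : Type*} [MeasurableSpace Ω] (μ : Measure Ω) [IsProbabilityMeasure μ]
    (n : ℕ) (hn : 0 < n)
    (d : Ω → EuclideanSpace ℝ (Fin n)) (hd : Measurable d)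
    (f : Ω → ℝ) (hf : Measurable f)
    (C : Set (EuclideanSpace ℝ (Fin n))) (hC : MeasurableSet C)
    (c : EuclideanSpace ℝ (Fin n)) (fmin fmax : ℝ)
    (hbound : ∀ᵐ ω ∂μ, fmin ≤ f ω ∧ f ω ≤ fmax)
    (hlt : fmin < fmax)
    (otilde : Ω → ℝ)
    (hot : ∀ ω, (d ω ∈ C → otilde ω = f ω) ∧
      (d ω ∉ C → otilde ω = fmin - ‖d ω - c‖))
    (hoInt : Integrable otilde μ) :
    (μ {ω | d ω ∈ C}).toReal ≥ ((∫ ω, otilde ω ∂μ) - fmin) / (fmax - fmin) := by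
  set A : Set Ω := {ω | d ω ∈ C} with hA
  have hAm : MeasurableSet A := hd hC
  set g : Ω → ℝ := fun ω => A.indicator (fun _ => fmax - fmin) ω + fmin with hg
  have hgInt : Integrable g μ := by
    apply Integrable.add
    · exact (integrable_const (fmax - fmin)).indicator hAm
    · exact integrable_const fmin
  have hle : ∀ᵐ ω ∂μ, otilde ω ≤ g ω := by
    filter_upwards [hbound] with ω hb
    by_cases h : d ω ∈ C
    · rw [(hot ω).1 h, hg]
      simp only [Set.indicator_of_mem (show ω ∈ A from h)]
      linarith [hb.2]
    · rw [(hot ω).2 h, hg]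
      simp only [Set.indicator_of_notMem (show ω ∉ A from h)]
      have := norm_nonneg (d ω - c)
      linarith
  have hInt_le : ∫ ω, otilde ω ∂μ ≤ ∫ ω, g ω ∂μ :=
    integral_mono_ae hoInt hgInt hle
  have hIg : ∫ ω, g ω ∂μ = (μ A).toReal * (fmax - fmin) + fmin := by
    rw [hg, integral_add ((integrable_const (fmax - fmin)).indicator hAm)
      (integrable_const fmin), integral_indicator_const _ hAm, integral_const]
    simp [smul_eq_mul, mul_comm]
    exact Or.inl rfl
  have hpos : (0:ℝ) < fmax - fmin := sub_pos.mpr hlt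
  rw [ge_iff_le, div_le_iff₀ hpos]
  calc (∫ ω, otilde ω ∂μ) - fmin ≤ (μ A).toReal * (fmax - fmin) := by
        rw [hIg] at hInt_le; linarith
    _ = (μ A).toReal * (fmax - fmin) := rfl
end
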